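/- arXiv:2409.01723 — 2 statements merged into one kernel-verified Lean document; each statement's English description precedes it below -/
import Mathlib

section
/- For every natural number n ≥ 6, the identity C(n-1,4) + (n-2) + 1 + Σ_{j=5}^{n-1} (2 + (n-j) + C(j-3,2)) + C(n-4,2) = C(n,4) holds, where C(a,b) denotes the binomial coefficient. -/
lemma aux (m : ℕ) :
    (m + 6 - 1).choose 4 + (m + 6 - 2) + 1 +
      (∑ j ∈ Finset.Icc 5 (m + 6 - 1), (2 + (m + 6 - j) + (j - 3).choose 2)) +
      (m + 6 - 4).choose 2 = (m + 6).choose 4 := by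
  induction m with
  | zero => decide
  | succ m ih =>
    have hset : Finset.Icc 5 (m + 1 + 6 - 1) = insert (m + 6) (Finset.Icc 5 (m + 6 - 1)) := by
      ext x; simp only [Finset.mem_Icc, Finset.mem_insert]; omega
    rw [hset, Finset.sum_insert (by simp)]
    have hcard : (Finset.Icc 5 (m + 6 - 1)).card = m + 1 := by
      rw [Nat.card_Icc]; omega
    have hsum : (∑ j ∈ Finset.Icc 5 (m + 6 - 1), (2 + (m + 1 + 6 - j) + (j - 3).choose 2))
        = (∑ j ∈ Finset.Icc 5 (m + 6 - 1), (2 + (m + 6 - j) + (j - 3).choose 2)) + (m + 1) := by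
      have h : (∑ j ∈ Finset.Icc 5 (m + 6 - 1), (2 + (m + 1 + 6 - j) + (j - 3).choose 2))
          = (∑ j ∈ Finset.Icc 5 (m + 6 - 1), ((2 + (m + 6 - j) + (j - 3).choose 2) + 1)) := by
        refine Finset.sum_congr rfl fun j hj => ?_
        simp only [Finset.mem_Icc] at hj
        omega
      rw [h, Finset.sum_add_distrib, Finset.sum_const, smul_eq_mul, mul_one, hcard]
    rw [hsum]
    have e6 : m + 1 + 6 - (m + 6) = 1 := by omega
    have e1 : m + 6 - 3 = m + 3 := by omega
    rw [e6, e1]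
    have a : (m + 7).choose 4 = (m + 6).choose 4 + (m + 6).choose 3 := by
      rw [Nat.choose_succ_succ' (m + 6) 3]; exact Nat.add_comm _ _
    have b : (m + 6).choose 4 = (m + 5).choose 4 + (m + 5).choose 3 := by
      rw [Nat.choose_succ_succ' (m + 5) 3]; exact Nat.add_comm _ _
    have c : (m + 6).choose 3 = (m + 5).choose 3 + (m + 5).choose 2 := by
      rw [Nat.choose_succ_succ' (m + 5) 2]; exact Nat.add_comm _ _
    have d : (m + 5).choose 2 = (m + 4).choose 2 + (m + 4) := by
      rw [Nat.choose_succ_succ' (m + 4) 1, Nat.choose_one_right]; exact Nat.add_comm _ _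
    have e : (m + 4).choose 2 = (m + 3).choose 2 + (m + 3) := by
      rw [Nat.choose_succ_succ' (m + 3) 1, Nat.choose_one_right]; exact Nat.add_comm _ _
    have f : (m + 3).choose 2 = (m + 2).choose 2 + (m + 2) := by
      rw [Nat.choose_succ_succ' (m + 2) 1, Nat.choose_one_right]; exact Nat.add_comm _ _
    have h1 : m + 6 - 1 = m + 5 := by omega
    have h2 : m + 6 - 2 = m + 4 := by omega
    have h4 : m + 6 - 4 = m + 2 := by omega
    have h1' : m + 1 + 6 - 1 = m + 6 := by omega
    have h2' : m + 1 + 6 - 2 = m + 5 := by omega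
    have h4' : m + 1 + 6 - 4 = m + 3 := by omega
    rw [h1, h2, h4] at ih
    rw [h1', h2', h4', show m + 1 + 6 = m + 7 by omega]
    rw [h1]
    omega

theorem stmt_0 (n : ℕ) (hn : 6 ≤ n) :
    (n - 1).choose 4 + (n - 2) + 1 +
      (∑ j ∈ Finset.Icc 5 (n - 1), (2 + (n - j) + (j - 3).choose 2)) +
      (n - 4).choose 2 = n.choose 4 := by
  obtain ⟨m, rfl⟩ : ∃ m, n = m + 6 := ⟨n - 6, by omega⟩
  exact aux m
end

section
/- Every set of 5 points in the plane in general position (no three collinear) contains 4 points in convex position, i.e., 4 points such that none of them lies in the convex hull of the other three. -/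
noncomputable def det3 (a b c : EuclideanSpace ℝ (Fin 2)) : ℝ :=
  (b 0 - a 0) * (c 1 - a 1) - (b 1 - a 1) * (c 0 - a 0)

lemma sgn_perm {x y : ℝ} (h : x = y) : decide (0 < x) = decide (0 < y) := by rw [h]

lemma sgn_flip {x y : ℝ} (h : x = -y) (hy : y ≠ 0) :
    decide (0 < x) = !decide (0 < y) := by
  subst h
  rcases hy.lt_or_gt with h'|h'
  · simp [neg_pos.mpr h', not_lt.mpr h'.le]
  · simp [not_lt.mpr (neg_nonpos.mpr h'.le), h']

lemma sgn_mulpos {x y : ℝ} (h : 0 < x * y) : decide (0 < x) = decide (0 < y) := by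
  rcases mul_pos_iff.mp h with ⟨hx,hy⟩|⟨hx,hy⟩
  · simp [hx, hy]
  · simp [not_lt.mpr hx.le, not_lt.mpr hy.le]

lemma prodsgn {u v : ℝ} (hu : u ≠ 0) (hv : v ≠ 0) :
    (decide (0 < u) == decide (0 < v)) = decide (0 < u * v) := by
  rcases hu.lt_or_gt with h1|h1 <;> rcases hv.lt_or_gt with h2|h2
  · simp [not_lt.mpr h1.le, not_lt.mpr h2.le, mul_pos_of_neg_of_neg h1 h2]
  · simp [not_lt.mpr h1.le, h2, not_lt.mpr (mul_nonpos_of_nonpos_of_nonneg h1.le h2.le)]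
  · simp [h1, not_lt.mpr h2.le, not_lt.mpr (mul_nonpos_of_nonneg_of_nonpos h1.le h2.le)]
  · simp [h1, h2, mul_pos h1 h2]

lemma gp_sgn {u1 v1 u2 v2 u3 v3 : ℝ} (hid : u1*v1 - u2*v2 + u3*v3 = 0)
    (h1 : u1 ≠ 0) (h1' : v1 ≠ 0) (h2 : u2 ≠ 0) (h2' : v2 ≠ 0) (h3 : u3 ≠ 0) (h3' : v3 ≠ 0) :
    ((decide (0 < u1) == decide (0 < v1)) = (decide (0 < u3) == decide (0 < v3))) →
    ((decide (0 < u2) == decide (0 < v2)) = (decide (0 < u1) == decide (0 < v1))) := by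
  rw [prodsgn h1 h1', prodsgn h2 h2', prodsgn h3 h3', decide_eq_decide, decide_eq_decide]
  intro hXZ
  have hX : u1 * v1 ≠ 0 := mul_ne_zero h1 h1'
  have hY : u2 * v2 ≠ 0 := mul_ne_zero h2 h2'
  have hZ : u3 * v3 ≠ 0 := mul_ne_zero h3 h3'
  rcases hX.lt_or_gt with hx|hx
  · have hz : ¬ (0 < u3 * v3) := fun h => (not_lt.mpr hx.le) (hXZ.mpr h)
    have hz' : u3 * v3 < 0 := hZ.lt_or_gt.resolve_right hz
    constructor
    · intro hy; linarith
    · intro h; linarith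
  · have hz : 0 < u3 * v3 := hXZ.mp hx
    constructor
    · intro _; exact hx
    · intro _; nlinarith [hx, hz, hid]



lemma collinear_of_det3 {a b c : EuclideanSpace ℝ (Fin 2)} (h : det3 a b c = 0) :
    Collinear ℝ ({a, b, c} : Set (EuclideanSpace ℝ (Fin 2))) := by
  by_cases hab : b = a
  · subst hab
    rw [Set.insert_comm, Set.insert_idem]
    exact collinear_pair ℝ _ _
  · apply (collinear_iff_of_mem (Set.mem_insert a _)).mpr
    refine ⟨b - a, fun q hq => ?_⟩
    simp only [Set.mem_insert_iff, Set.mem_singleton_iff] at hq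
    rcases hq with rfl | rfl | rfl
    · exact ⟨0, by simp⟩
    · exact ⟨1, by simp⟩
    · have hcoord : b 0 - a 0 ≠ 0 ∨ b 1 - a 1 ≠ 0 := by
        by_contra h'
        push_neg at h'
        apply hab
        ext i
        fin_cases i
        · have := h'.1; simpa [sub_eq_zero] using this
        · have := h'.2; simpa [sub_eq_zero] using this
      simp only [det3] at h
      rcases hcoord with hx | hy
      · refine ⟨(q 0 - a 0) / (b 0 - a 0), ?_⟩
        ext i
        fin_cases i <;>
          simp only [vadd_eq_add, PiLp.add_apply, PiLp.smul_apply, PiLp.sub_apply,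
            smul_eq_mul, Fin.zero_eta, Fin.mk_one, Fin.isValue]
        · field_simp
          ring
        · field_simp
          nlinarith [h]
      · refine ⟨(q 1 - a 1) / (b 1 - a 1), ?_⟩
        ext i
        fin_cases i <;>
          simp only [vadd_eq_add, PiLp.add_apply, PiLp.smul_apply, PiLp.sub_apply,
            smul_eq_mul, Fin.zero_eta, Fin.mk_one, Fin.isValue]
        · field_simp
          nlinarith [h]
        · field_simp
          ring



lemma mem_tri {a b c q : EuclideanSpace ℝ (Fin 2)}
    (hq : q ∈ convexHull ℝ ({a, b, c} : Set (EuclideanSpace ℝ (Fin 2)))) :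
    ∃ α β γ : ℝ, 0 ≤ α ∧ 0 ≤ β ∧ 0 ≤ γ ∧ α + β + γ = 1 ∧ q = α • a + β • b + γ • c := by
  rw [convexHull_insert (by simp : ({b, c} : Set (EuclideanSpace ℝ (Fin 2))).Nonempty),
    convexHull_pair, mem_convexJoin] at hq
  obtain ⟨x, hx, z, hz, hqseg⟩ := hq
  rw [Set.mem_singleton_iff] at hx
  subst hx
  obtain ⟨u, v, hu, hv, huv, hz⟩ := hz
  obtain ⟨s, t, hs, ht, hst, hq'⟩ := hqseg
  refine ⟨s, t * u, t * v, hs, mul_nonneg ht hu, mul_nonneg ht hv, by nlinarith, ?_⟩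
  rw [← hq', ← hz]
  module

lemma inside_pos {a b c q : EuclideanSpace ℝ (Fin 2)}
    (h1 : det3 a b q ≠ 0) (h2 : det3 b c q ≠ 0) (h3 : det3 c a q ≠ 0)
    (hq : q ∈ convexHull ℝ ({a, b, c} : Set (EuclideanSpace ℝ (Fin 2)))) :
    0 < det3 a b q * det3 a b c ∧ 0 < det3 b c q * det3 b c a ∧ 0 < det3 c a q * det3 c a b := by
  obtain ⟨α, β, γ, hα, hβ, hγ, hsum, hcomb⟩ := mem_tri hq
  have hq0 : q 0 = α * a 0 + β * b 0 + γ * c 0 := by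
    rw [hcomb]; simp [PiLp.add_apply, PiLp.smul_apply]
  have hq1 : q 1 = α * a 1 + β * b 1 + γ * c 1 := by
    rw [hcomb]; simp [PiLp.add_apply, PiLp.smul_apply]
  have hα' : α = 1 - β - γ := by linarith
  have e1 : det3 a b q = γ * det3 a b c := by
    simp only [det3]; rw [hq0, hq1, hα']; ring
  have e2 : det3 b c q = α * det3 b c a := by
    simp only [det3]; rw [hq0, hq1, hα']; ring
  have e3 : det3 c a q = β * det3 c a b := by
    simp only [det3]; rw [hq0, hq1, hα']; ring
  refine ⟨?_, ?_, ?_⟩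
  · rw [e1] at h1 ⊢
    have hpos : 0 < γ := lt_of_le_of_ne hγ (by rintro rfl; simp at h1)
    have hD : det3 a b c ≠ 0 := right_ne_zero_of_mul h1
    have hsq : 0 < (det3 a b c) ^ 2 := by positivity
    nlinarith
  · rw [e2] at h2 ⊢
    have hpos : 0 < α := lt_of_le_of_ne hα (by rintro rfl; simp at h2)
    have hD : det3 b c a ≠ 0 := right_ne_zero_of_mul h2
    have hsq : 0 < (det3 b c a) ^ 2 := by positivity
    nlinarith
  · rw [e3] at h3 ⊢
    have hpos : 0 < β := lt_of_le_of_ne hβ (by rintro rfl; simp at h3)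
    have hD : det3 c a b ≠ 0 := right_ne_zero_of_mul h3
    have hsq : 0 < (det3 c a b) ^ 2 := by positivity
    nlinarith


set_option maxHeartbeats 4000000 in
set_option synthInstance.maxSize 4000 in
set_option synthInstance.maxHeartbeats 1000000 in
theorem core5 (b0 b1 b2 b3 b4 b5 b6 b7 b8 b9 : Bool)
    (hgp0 : ((b0 == b5) = (b2 == b3)) → ((b1 == b4) = (b0 == b5)))
    (hgp1 : ((b1 == b4) = (b2 == (!b3))) → ((b0 == b5) = (b1 == b4)))
    (hgp2 : ((b2 == b3) = (b1 == (!b4))) → ((b0 == (!b5)) = (b2 == b3)))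
    (hgp3 : (((!b0) == b8) = ((!b2) == b6)) → (((!b1) == b7) = ((!b0) == b8)))
    (hgp4 : (((!b1) == b7) = ((!b2) == (!b6))) → (((!b0) == b8) = ((!b1) == b7)))
    (hgp5 : (((!b2) == b6) = ((!b1) == (!b7))) → (((!b0) == (!b8)) = ((!b2) == b6)))
    (hgp6 : ((b0 == b9) = ((!b4) == (!b6))) → (((!b3) == (!b7)) = (b0 == b9)))
    (hgp7 : (((!b3) == (!b7)) = ((!b4) == b6)) → ((b0 == b9) = ((!b3) == (!b7))))
    (hgp8 : (((!b4) == (!b6)) = ((!b3) == b7)) → ((b0 == (!b9)) = ((!b4) == (!b6))))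
    (hgp9 : ((b1 == (!b9)) = ((!b5) == b6)) → ((b3 == (!b8)) = (b1 == (!b9))))
    (hgp10 : ((b3 == (!b8)) = ((!b5) == (!b6))) → ((b1 == (!b9)) = (b3 == (!b8))))
    (hgp11 : (((!b5) == b6) = (b3 == b8)) → ((b1 == b9) = ((!b5) == b6)))
    (hgp12 : ((b2 == b9) = (b5 == b7)) → ((b4 == b8) = (b2 == b9)))
    (hgp13 : ((b4 == b8) = (b5 == (!b7))) → ((b2 == b9) = (b4 == b8)))
    (hgp14 : ((b5 == b7) = (b4 == (!b8))) → ((b2 == (!b9)) = (b5 == b7))) :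
    ((¬((b0 = b6) ∧ (b3 = b6) ∧ ((!b1) = b6))) ∧ (¬(((!b0) = b3) ∧ (b6 = b3) ∧ (b1 = b3))) ∧ (¬((b0 = b1) ∧ ((!b6) = b1) ∧ (b3 = b1))) ∧ (¬((b1 = b0) ∧ (b6 = b0) ∧ ((!b3) = b0)))) ∨ ((¬((b0 = b7) ∧ (b4 = b7) ∧ ((!b2) = b7))) ∧ (¬(((!b0) = b4) ∧ (b7 = b4) ∧ (b2 = b4))) ∧ (¬((b0 = b2) ∧ ((!b7) = b2) ∧ (b4 = b2))) ∧ (¬((b2 = b0) ∧ (b7 = b0) ∧ ((!b4) = b0)))) ∨ ((¬((b1 = b8) ∧ (b5 = b8) ∧ ((!b2) = b8))) ∧ (¬(((!b1) = b5) ∧ (b8 = b5) ∧ (b2 = b5))) ∧ (¬((b1 = b2) ∧ ((!b8) = b2) ∧ (b5 = b2))) ∧ (¬((b2 = b1) ∧ (b8 = b1) ∧ ((!b5) = b1)))) ∨ ((¬((b3 = b9) ∧ (b5 = b9) ∧ ((!b4) = b9))) ∧ (¬(((!b3) = b5) ∧ (b9 = b5) ∧ (b4 = b5))) ∧ (¬((b3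 = b4) ∧ ((!b9) = b4) ∧ (b5 = b4))) ∧ (¬((b4 = b3) ∧ (b9 = b3) ∧ ((!b5) = b3)))) ∨ ((¬((b6 = b9) ∧ (b8 = b9) ∧ ((!b7) = b9))) ∧ (¬(((!b6) = b8) ∧ (b9 = b8) ∧ (b7 = b8))) ∧ (¬((b6 = b7) ∧ ((!b9) = b7) ∧ (b8 = b7))) ∧ (¬((b7 = b6) ∧ (b9 = b6) ∧ ((!b8) = b6)))) := by
  revert b0 b1 b2 b3 b4 b5 b6 b7 b8 b9
  decide

set_option maxHeartbeats 4000000 in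
theorem stmt_15 (p : Fin 5 → EuclideanSpace ℝ (Fin 2))
    (hinj : Function.Injective p)
    (hgen : ∀ i j k : Fin 5, i ≠ j → j ≠ k → i ≠ k →
      ¬ Collinear ℝ ({p i, p j, p k} : Set (EuclideanSpace ℝ (Fin 2)))) :
    ∃ s : Finset (Fin 5), s.card = 4 ∧
      ∀ i ∈ s, p i ∉ convexHull ℝ (p '' ↑(s.erase i)) := by
  have hne : ∀ i j k : Fin 5, i ≠ j → j ≠ k → i ≠ k → det3 (p i) (p j) (p k) ≠ 0 :=
    fun i j k hij hjk hik h0 => hgen i j k hij hjk hik (collinear_of_det3 h0)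
  have hp_0_3_2 : decide (0 < det3 (p 0) (p 3) (p 2)) = !decide (0 < det3 (p 0) (p 2) (p 3)) :=
    sgn_flip (by simp only [det3]; ring) (hne 0 2 3 (by decide) (by decide) (by decide))
  have hp_0_4_3 : decide (0 < det3 (p 0) (p 4) (p 3)) = !decide (0 < det3 (p 0) (p 3) (p 4)) :=
    sgn_flip (by simp only [det3]; ring) (hne 0 3 4 (by decide) (by decide) (by decide))
  have hp_0_4_2 : decide (0 < det3 (p 0) (p 4) (p 2)) = !decide (0 < det3 (p 0) (p 2) (p 4)) :=
    sgn_flip (by simp only [det3]; ring) (hne 0 2 4 (by decide) (by decide) (by decide))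
  have hp_1_0_2 : decide (0 < det3 (p 1) (p 0) (p 2)) = !decide (0 < det3 (p 0) (p 1) (p 2)) :=
    sgn_flip (by simp only [det3]; ring) (hne 0 1 2 (by decide) (by decide) (by decide))
  have hp_1_0_3 : decide (0 < det3 (p 1) (p 0) (p 3)) = !decide (0 < det3 (p 0) (p 1) (p 3)) :=
    sgn_flip (by simp only [det3]; ring) (hne 0 1 3 (by decide) (by decide) (by decide))
  have hp_1_0_4 : decide (0 < det3 (p 1) (p 0) (p 4)) = !decide (0 < det3 (p 0) (p 1) (p 4)) :=
    sgn_flip (by simp only [det3]; ring) (hne 0 1 4 (by decide) (by decide) (by decide))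
  have hp_1_3_2 : decide (0 < det3 (p 1) (p 3) (p 2)) = !decide (0 < det3 (p 1) (p 2) (p 3)) :=
    sgn_flip (by simp only [det3]; ring) (hne 1 2 3 (by decide) (by decide) (by decide))
  have hp_1_4_3 : decide (0 < det3 (p 1) (p 4) (p 3)) = !decide (0 < det3 (p 1) (p 3) (p 4)) :=
    sgn_flip (by simp only [det3]; ring) (hne 1 3 4 (by decide) (by decide) (by decide))
  have hp_1_4_2 : decide (0 < det3 (p 1) (p 4) (p 2)) = !decide (0 < det3 (p 1) (p 2) (p 4)) :=
    sgn_flip (by simp only [det3]; ring) (hne 1 2 4 (by decide) (by decide) (by decide))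
  have hp_2_0_1 : decide (0 < det3 (p 2) (p 0) (p 1)) = decide (0 < det3 (p 0) (p 1) (p 2)) :=
    sgn_perm (by simp only [det3]; ring)
  have hp_2_0_3 : decide (0 < det3 (p 2) (p 0) (p 3)) = !decide (0 < det3 (p 0) (p 2) (p 3)) :=
    sgn_flip (by simp only [det3]; ring) (hne 0 2 3 (by decide) (by decide) (by decide))
  have hp_2_1_4 : decide (0 < det3 (p 2) (p 1) (p 4)) = !decide (0 < det3 (p 1) (p 2) (p 4)) :=
    sgn_flip (by simp only [det3]; ring) (hne 1 2 4 (by decide) (by decide) (by decide))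
  have hp_2_0_4 : decide (0 < det3 (p 2) (p 0) (p 4)) = !decide (0 < det3 (p 0) (p 2) (p 4)) :=
    sgn_flip (by simp only [det3]; ring) (hne 0 2 4 (by decide) (by decide) (by decide))
  have hp_2_1_3 : decide (0 < det3 (p 2) (p 1) (p 3)) = !decide (0 < det3 (p 1) (p 2) (p 3)) :=
    sgn_flip (by simp only [det3]; ring) (hne 1 2 3 (by decide) (by decide) (by decide))
  have hp_2_3_1 : decide (0 < det3 (p 2) (p 3) (p 1)) = decide (0 < det3 (p 1) (p 2) (p 3)) :=
    sgn_perm (by simp only [det3]; ring)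
  have hp_2_4_3 : decide (0 < det3 (p 2) (p 4) (p 3)) = !decide (0 < det3 (p 2) (p 3) (p 4)) :=
    sgn_flip (by simp only [det3]; ring) (hne 2 3 4 (by decide) (by decide) (by decide))
  have hp_2_4_1 : decide (0 < det3 (p 2) (p 4) (p 1)) = decide (0 < det3 (p 1) (p 2) (p 4)) :=
    sgn_perm (by simp only [det3]; ring)
  have hp_3_0_1 : decide (0 < det3 (p 3) (p 0) (p 1)) = decide (0 < det3 (p 0) (p 1) (p 3)) :=
    sgn_perm (by simp only [det3]; ring)
  have hp_3_2_4 : decide (0 < det3 (p 3) (p 2) (p 4)) = !decide (0 < det3 (p 2) (p 3) (p 4)) :=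
    sgn_flip (by simp only [det3]; ring) (hne 2 3 4 (by decide) (by decide) (by decide))
  have hp_3_0_2 : decide (0 < det3 (p 3) (p 0) (p 2)) = decide (0 < det3 (p 0) (p 2) (p 3)) :=
    sgn_perm (by simp only [det3]; ring)
  have hp_3_1_4 : decide (0 < det3 (p 3) (p 1) (p 4)) = !decide (0 < det3 (p 1) (p 3) (p 4)) :=
    sgn_flip (by simp only [det3]; ring) (hne 1 3 4 (by decide) (by decide) (by decide))
  have hp_3_0_4 : decide (0 < det3 (p 3) (p 0) (p 4)) = !decide (0 < det3 (p 0) (p 3) (p 4)) :=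
    sgn_flip (by simp only [det3]; ring) (hne 0 3 4 (by decide) (by decide) (by decide))
  have hp_3_1_2 : decide (0 < det3 (p 3) (p 1) (p 2)) = decide (0 < det3 (p 1) (p 2) (p 3)) :=
    sgn_perm (by simp only [det3]; ring)
  have hp_3_2_1 : decide (0 < det3 (p 3) (p 2) (p 1)) = !decide (0 < det3 (p 1) (p 2) (p 3)) :=
    sgn_flip (by simp only [det3]; ring) (hne 1 2 3 (by decide) (by decide) (by decide))
  have hp_3_4_2 : decide (0 < det3 (p 3) (p 4) (p 2)) = decide (0 < det3 (p 2) (p 3) (p 4)) :=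
    sgn_perm (by simp only [det3]; ring)
  have hp_3_4_1 : decide (0 < det3 (p 3) (p 4) (p 1)) = decide (0 < det3 (p 1) (p 3) (p 4)) :=
    sgn_perm (by simp only [det3]; ring)
  have hp_4_0_1 : decide (0 < det3 (p 4) (p 0) (p 1)) = decide (0 < det3 (p 0) (p 1) (p 4)) :=
    sgn_perm (by simp only [det3]; ring)
  have hp_4_2_3 : decide (0 < det3 (p 4) (p 2) (p 3)) = decide (0 < det3 (p 2) (p 3) (p 4)) :=
    sgn_perm (by simp only [det3]; ring)
  have hp_4_0_2 : decide (0 < det3 (p 4) (p 0) (p 2)) = decide (0 < det3 (p 0) (p 2) (p 4)) :=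
    sgn_perm (by simp only [det3]; ring)
  have hp_4_1_3 : decide (0 < det3 (p 4) (p 1) (p 3)) = decide (0 < det3 (p 1) (p 3) (p 4)) :=
    sgn_perm (by simp only [det3]; ring)
  have hp_4_0_3 : decide (0 < det3 (p 4) (p 0) (p 3)) = decide (0 < det3 (p 0) (p 3) (p 4)) :=
    sgn_perm (by simp only [det3]; ring)
  have hp_4_1_2 : decide (0 < det3 (p 4) (p 1) (p 2)) = decide (0 < det3 (p 1) (p 2) (p 4)) :=
    sgn_perm (by simp only [det3]; ring)
  have hp_4_2_1 : decide (0 < det3 (p 4) (p 2) (p 1)) = !decide (0 < det3 (p 1) (p 2) (p 4)) :=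
    sgn_flip (by simp only [det3]; ring) (hne 1 2 4 (by decide) (by decide) (by decide))
  have hp_4_3_2 : decide (0 < det3 (p 4) (p 3) (p 2)) = !decide (0 < det3 (p 2) (p 3) (p 4)) :=
    sgn_flip (by simp only [det3]; ring) (hne 2 3 4 (by decide) (by decide) (by decide))
  have hp_4_3_1 : decide (0 < det3 (p 4) (p 3) (p 1)) = !decide (0 < det3 (p 1) (p 3) (p 4)) :=
    sgn_flip (by simp only [det3]; ring) (hne 1 3 4 (by decide) (by decide) (by decide))
  have hp_1_2_0 : decide (0 < det3 (p 1) (p 2) (p 0)) = decide (0 < det3 (p 0) (p 1) (p 2)) :=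
    sgn_perm (by simp only [det3]; ring)
  have hp_2_3_0 : decide (0 < det3 (p 2) (p 3) (p 0)) = decide (0 < det3 (p 0) (p 2) (p 3)) :=
    sgn_perm (by simp only [det3]; ring)
  have hp_3_1_0 : decide (0 < det3 (p 3) (p 1) (p 0)) = !decide (0 < det3 (p 0) (p 1) (p 3)) :=
    sgn_flip (by simp only [det3]; ring) (hne 0 1 3 (by decide) (by decide) (by decide))
  have hp_0_2_1 : decide (0 < det3 (p 0) (p 2) (p 1)) = !decide (0 < det3 (p 0) (p 1) (p 2)) :=
    sgn_flip (by simp only [det3]; ring) (hne 0 1 2 (by decide) (by decide) (by decide))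
  have hp_1_3_0 : decide (0 < det3 (p 1) (p 3) (p 0)) = decide (0 < det3 (p 0) (p 1) (p 3)) :=
    sgn_perm (by simp only [det3]; ring)
  have hp_2_4_0 : decide (0 < det3 (p 2) (p 4) (p 0)) = decide (0 < det3 (p 0) (p 2) (p 4)) :=
    sgn_perm (by simp only [det3]; ring)
  have hp_4_1_0 : decide (0 < det3 (p 4) (p 1) (p 0)) = !decide (0 < det3 (p 0) (p 1) (p 4)) :=
    sgn_flip (by simp only [det3]; ring) (hne 0 1 4 (by decide) (by decide) (by decide))
  have hp_1_4_0 : decide (0 < det3 (p 1) (p 4) (p 0)) = decide (0 < det3 (p 0) (p 1) (p 4)) :=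
    sgn_perm (by simp only [det3]; ring)
  have hp_3_4_0 : decide (0 < det3 (p 3) (p 4) (p 0)) = decide (0 < det3 (p 0) (p 3) (p 4)) :=
    sgn_perm (by simp only [det3]; ring)
  have hp_0_3_1 : decide (0 < det3 (p 0) (p 3) (p 1)) = !decide (0 < det3 (p 0) (p 1) (p 3)) :=
    sgn_flip (by simp only [det3]; ring) (hne 0 1 3 (by decide) (by decide) (by decide))
  have hp_4_2_0 : decide (0 < det3 (p 4) (p 2) (p 0)) = !decide (0 < det3 (p 0) (p 2) (p 4)) :=
    sgn_flip (by simp only [det3]; ring) (hne 0 2 4 (by decide) (by decide) (by decide))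
  have hgp0 := gp_sgn (show det3 (p 0) (p 1) (p 2) * det3 (p 0) (p 3) (p 4) - det3 (p 0) (p 1) (p 3) * det3 (p 0) (p 2) (p 4) + det3 (p 0) (p 1) (p 4) * det3 (p 0) (p 2) (p 3) = 0 by simp only [det3]; ring)
    (hne 0 1 2 (by decide) (by decide) (by decide)) (hne 0 3 4 (by decide) (by decide) (by decide)) (hne 0 1 3 (by decide) (by decide) (by decide)) (hne 0 2 4 (by decide) (by decide) (by decide)) (hne 0 1 4 (by decide) (by decide) (by decide)) (hne 0 2 3 (by decide) (by decide) (by decide))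
  have hgp1 := gp_sgn (show det3 (p 0) (p 1) (p 3) * det3 (p 0) (p 2) (p 4) - det3 (p 0) (p 1) (p 2) * det3 (p 0) (p 3) (p 4) + det3 (p 0) (p 1) (p 4) * det3 (p 0) (p 3) (p 2) = 0 by simp only [det3]; ring)
    (hne 0 1 3 (by decide) (by decide) (by decide)) (hne 0 2 4 (by decide) (by decide) (by decide)) (hne 0 1 2 (by decide) (by decide) (by decide)) (hne 0 3 4 (by decide) (by decide) (by decide)) (hne 0 1 4 (by decide) (by decide) (by decide)) (hne 0 3 2 (by decide) (by decide) (by decide))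
  rw [hp_0_3_2] at hgp1
  have hgp2 := gp_sgn (show det3 (p 0) (p 1) (p 4) * det3 (p 0) (p 2) (p 3) - det3 (p 0) (p 1) (p 2) * det3 (p 0) (p 4) (p 3) + det3 (p 0) (p 1) (p 3) * det3 (p 0) (p 4) (p 2) = 0 by simp only [det3]; ring)
    (hne 0 1 4 (by decide) (by decide) (by decide)) (hne 0 2 3 (by decide) (by decide) (by decide)) (hne 0 1 2 (by decide) (by decide) (by decide)) (hne 0 4 3 (by decide) (by decide) (by decide)) (hne 0 1 3 (by decide) (by decide) (by decide)) (hne 0 4 2 (by decide) (by decide) (by decide))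
  rw [hp_0_4_3, hp_0_4_2] at hgp2
  have hgp3 := gp_sgn (show det3 (p 1) (p 0) (p 2) * det3 (p 1) (p 3) (p 4) - det3 (p 1) (p 0) (p 3) * det3 (p 1) (p 2) (p 4) + det3 (p 1) (p 0) (p 4) * det3 (p 1) (p 2) (p 3) = 0 by simp only [det3]; ring)
    (hne 1 0 2 (by decide) (by decide) (by decide)) (hne 1 3 4 (by decide) (by decide) (by decide)) (hne 1 0 3 (by decide) (by decide) (by decide)) (hne 1 2 4 (by decide) (by decide) (by decide)) (hne 1 0 4 (by decide) (by decide) (by decide)) (hne 1 2 3 (by decide) (by decide) (by decide))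
  rw [hp_1_0_2, hp_1_0_3, hp_1_0_4] at hgp3
  have hgp4 := gp_sgn (show det3 (p 1) (p 0) (p 3) * det3 (p 1) (p 2) (p 4) - det3 (p 1) (p 0) (p 2) * det3 (p 1) (p 3) (p 4) + det3 (p 1) (p 0) (p 4) * det3 (p 1) (p 3) (p 2) = 0 by simp only [det3]; ring)
    (hne 1 0 3 (by decide) (by decide) (by decide)) (hne 1 2 4 (by decide) (by decide) (by decide)) (hne 1 0 2 (by decide) (by decide) (by decide)) (hne 1 3 4 (by decide) (by decide) (by decide)) (hne 1 0 4 (by decide) (by decide) (by decide)) (hne 1 3 2 (by decide) (by decide) (by decide))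
  rw [hp_1_0_3, hp_1_0_2, hp_1_0_4, hp_1_3_2] at hgp4
  have hgp5 := gp_sgn (show det3 (p 1) (p 0) (p 4) * det3 (p 1) (p 2) (p 3) - det3 (p 1) (p 0) (p 2) * det3 (p 1) (p 4) (p 3) + det3 (p 1) (p 0) (p 3) * det3 (p 1) (p 4) (p 2) = 0 by simp only [det3]; ring)
    (hne 1 0 4 (by decide) (by decide) (by decide)) (hne 1 2 3 (by decide) (by decide) (by decide)) (hne 1 0 2 (by decide) (by decide) (by decide)) (hne 1 4 3 (by decide) (by decide) (by decide)) (hne 1 0 3 (by decide) (by decide) (by decide)) (hne 1 4 2 (by decide) (by decide) (by decide))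
  rw [hp_1_0_4, hp_1_0_2, hp_1_4_3, hp_1_0_3, hp_1_4_2] at hgp5
  have hgp6 := gp_sgn (show det3 (p 2) (p 0) (p 1) * det3 (p 2) (p 3) (p 4) - det3 (p 2) (p 0) (p 3) * det3 (p 2) (p 1) (p 4) + det3 (p 2) (p 0) (p 4) * det3 (p 2) (p 1) (p 3) = 0 by simp only [det3]; ring)
    (hne 2 0 1 (by decide) (by decide) (by decide)) (hne 2 3 4 (by decide) (by decide) (by decide)) (hne 2 0 3 (by decide) (by decide) (by decide)) (hne 2 1 4 (by decide) (by decide) (by decide)) (hne 2 0 4 (by decide) (by decide) (by decide)) (hne 2 1 3 (by decide) (by decide) (by decide))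
  rw [hp_2_0_1, hp_2_0_3, hp_2_1_4, hp_2_0_4, hp_2_1_3] at hgp6
  have hgp7 := gp_sgn (show det3 (p 2) (p 0) (p 3) * det3 (p 2) (p 1) (p 4) - det3 (p 2) (p 0) (p 1) * det3 (p 2) (p 3) (p 4) + det3 (p 2) (p 0) (p 4) * det3 (p 2) (p 3) (p 1) = 0 by simp only [det3]; ring)
    (hne 2 0 3 (by decide) (by decide) (by decide)) (hne 2 1 4 (by decide) (by decide) (by decide)) (hne 2 0 1 (by decide) (by decide) (by decide)) (hne 2 3 4 (by decide) (by decide) (by decide)) (hne 2 0 4 (by decide) (by decide) (by decide)) (hne 2 3 1 (by decide) (by decide) (by decide))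
  rw [hp_2_0_3, hp_2_1_4, hp_2_0_1, hp_2_0_4, hp_2_3_1] at hgp7
  have hgp8 := gp_sgn (show det3 (p 2) (p 0) (p 4) * det3 (p 2) (p 1) (p 3) - det3 (p 2) (p 0) (p 1) * det3 (p 2) (p 4) (p 3) + det3 (p 2) (p 0) (p 3) * det3 (p 2) (p 4) (p 1) = 0 by simp only [det3]; ring)
    (hne 2 0 4 (by decide) (by decide) (by decide)) (hne 2 1 3 (by decide) (by decide) (by decide)) (hne 2 0 1 (by decide) (by decide) (by decide)) (hne 2 4 3 (by decide) (by decide) (by decide)) (hne 2 0 3 (by decide) (by decide) (by decide)) (hne 2 4 1 (by decide) (by decide) (by decide))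
  rw [hp_2_0_4, hp_2_1_3, hp_2_0_1, hp_2_4_3, hp_2_0_3, hp_2_4_1] at hgp8
  have hgp9 := gp_sgn (show det3 (p 3) (p 0) (p 1) * det3 (p 3) (p 2) (p 4) - det3 (p 3) (p 0) (p 2) * det3 (p 3) (p 1) (p 4) + det3 (p 3) (p 0) (p 4) * det3 (p 3) (p 1) (p 2) = 0 by simp only [det3]; ring)
    (hne 3 0 1 (by decide) (by decide) (by decide)) (hne 3 2 4 (by decide) (by decide) (by decide)) (hne 3 0 2 (by decide) (by decide) (by decide)) (hne 3 1 4 (by decide) (by decide) (by decide)) (hne 3 0 4 (by decide) (by decide) (by decide)) (hne 3 1 2 (by decide) (by decide) (by decide))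
  rw [hp_3_0_1, hp_3_2_4, hp_3_0_2, hp_3_1_4, hp_3_0_4, hp_3_1_2] at hgp9
  have hgp10 := gp_sgn (show det3 (p 3) (p 0) (p 2) * det3 (p 3) (p 1) (p 4) - det3 (p 3) (p 0) (p 1) * det3 (p 3) (p 2) (p 4) + det3 (p 3) (p 0) (p 4) * det3 (p 3) (p 2) (p 1) = 0 by simp only [det3]; ring)
    (hne 3 0 2 (by decide) (by decide) (by decide)) (hne 3 1 4 (by decide) (by decide) (by decide)) (hne 3 0 1 (by decide) (by decide) (by decide)) (hne 3 2 4 (by decide) (by decide) (by decide)) (hne 3 0 4 (by decide) (by decide) (by decide)) (hne 3 2 1 (by decide) (by decide) (by decide))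
  rw [hp_3_0_2, hp_3_1_4, hp_3_0_1, hp_3_2_4, hp_3_0_4, hp_3_2_1] at hgp10
  have hgp11 := gp_sgn (show det3 (p 3) (p 0) (p 4) * det3 (p 3) (p 1) (p 2) - det3 (p 3) (p 0) (p 1) * det3 (p 3) (p 4) (p 2) + det3 (p 3) (p 0) (p 2) * det3 (p 3) (p 4) (p 1) = 0 by simp only [det3]; ring)
    (hne 3 0 4 (by decide) (by decide) (by decide)) (hne 3 1 2 (by decide) (by decide) (by decide)) (hne 3 0 1 (by decide) (by decide) (by decide)) (hne 3 4 2 (by decide) (by decide) (by decide)) (hne 3 0 2 (by decide) (by decide) (by decide)) (hne 3 4 1 (by decide) (by decide) (by decide))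
  rw [hp_3_0_4, hp_3_1_2, hp_3_0_1, hp_3_4_2, hp_3_0_2, hp_3_4_1] at hgp11
  have hgp12 := gp_sgn (show det3 (p 4) (p 0) (p 1) * det3 (p 4) (p 2) (p 3) - det3 (p 4) (p 0) (p 2) * det3 (p 4) (p 1) (p 3) + det3 (p 4) (p 0) (p 3) * det3 (p 4) (p 1) (p 2) = 0 by simp only [det3]; ring)
    (hne 4 0 1 (by decide) (by decide) (by decide)) (hne 4 2 3 (by decide) (by decide) (by decide)) (hne 4 0 2 (by decide) (by decide) (by decide)) (hne 4 1 3 (by decide) (by decide) (by decide)) (hne 4 0 3 (by decide) (by decide) (by decide)) (hne 4 1 2 (by decide) (by decide) (by decide))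
  rw [hp_4_0_1, hp_4_2_3, hp_4_0_2, hp_4_1_3, hp_4_0_3, hp_4_1_2] at hgp12
  have hgp13 := gp_sgn (show det3 (p 4) (p 0) (p 2) * det3 (p 4) (p 1) (p 3) - det3 (p 4) (p 0) (p 1) * det3 (p 4) (p 2) (p 3) + det3 (p 4) (p 0) (p 3) * det3 (p 4) (p 2) (p 1) = 0 by simp only [det3]; ring)
    (hne 4 0 2 (by decide) (by decide) (by decide)) (hne 4 1 3 (by decide) (by decide) (by decide)) (hne 4 0 1 (by decide) (by decide) (by decide)) (hne 4 2 3 (by decide) (by decide) (by decide)) (hne 4 0 3 (by decide) (by decide) (by decide)) (hne 4 2 1 (by decide) (by decide) (by decide))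
  rw [hp_4_0_2, hp_4_1_3, hp_4_0_1, hp_4_2_3, hp_4_0_3, hp_4_2_1] at hgp13
  have hgp14 := gp_sgn (show det3 (p 4) (p 0) (p 3) * det3 (p 4) (p 1) (p 2) - det3 (p 4) (p 0) (p 1) * det3 (p 4) (p 3) (p 2) + det3 (p 4) (p 0) (p 2) * det3 (p 4) (p 3) (p 1) = 0 by simp only [det3]; ring)
    (hne 4 0 3 (by decide) (by decide) (by decide)) (hne 4 1 2 (by decide) (by decide) (by decide)) (hne 4 0 1 (by decide) (by decide) (by decide)) (hne 4 3 2 (by decide) (by decide) (by decide)) (hne 4 0 2 (by decide) (by decide) (by decide)) (hne 4 3 1 (by decide) (by decide) (by decide))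
  rw [hp_4_0_3, hp_4_1_2, hp_4_0_1, hp_4_3_2, hp_4_0_2, hp_4_3_1] at hgp14
  have key := core5 (decide (0 < det3 (p 0) (p 1) (p 2))) (decide (0 < det3 (p 0) (p 1) (p 3))) (decide (0 < det3 (p 0) (p 1) (p 4))) (decide (0 < det3 (p 0) (p 2) (p 3))) (decide (0 < det3 (p 0) (p 2) (p 4))) (decide (0 < det3 (p 0) (p 3) (p 4))) (decide (0 < det3 (p 1) (p 2) (p 3))) (decide (0 < det3 (p 1) (p 2) (p 4))) (decide (0 < det3 (p 1) (p 3) (p 4))) (decide (0 < det3 (p 2) (p 3) (p 4)))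
    hgp0 hgp1 hgp2 hgp3 hgp4 hgp5 hgp6 hgp7 hgp8 hgp9 hgp10 hgp11 hgp12 hgp13 hgp14
  rcases key with hK | hK | hK | hK | hK
  · obtain ⟨hKa, hKb, hKc, hKd⟩ := hK
    refine ⟨{0, 1, 2, 3}, by decide, ?_⟩
    intro i hi
    simp only [Finset.mem_insert, Finset.mem_singleton] at hi
    rcases hi with rfl | rfl | rfl | rfl
    · have himg : p '' ↑(({0, 1, 2, 3} : Finset (Fin 5)).erase 0) = {p 1, p 2, p 3} := by
        rw [show ({0, 1, 2, 3} : Finset (Fin 5)).erase 0 = {1, 2, 3} by decide]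
        simp [Set.image_insert_eq]
      rw [himg]
      intro hmem
      obtain ⟨P1, P2, P3⟩ := inside_pos (hne 1 2 0 (by decide) (by decide) (by decide))
        (hne 2 3 0 (by decide) (by decide) (by decide)) (hne 3 1 0 (by decide) (by decide) (by decide)) hmem
      have Q1 := sgn_mulpos P1
      have Q2 := sgn_mulpos P2
      have Q3 := sgn_mulpos P3
      rw [hp_1_2_0] at Q1
      rw [hp_2_3_0, hp_2_3_1] at Q2
      rw [hp_3_1_0, hp_3_1_2] at Q3
      exact hKa ⟨Q1, Q2, Q3⟩
    · have himg : p '' ↑(({0, 1, 2, 3} : Finset (Fin 5)).erase 1) = {p 0, p 2, p 3} := by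
        rw [show ({0, 1, 2, 3} : Finset (Fin 5)).erase 1 = {0, 2, 3} by decide]
        simp [Set.image_insert_eq]
      rw [himg]
      intro hmem
      obtain ⟨P1, P2, P3⟩ := inside_pos (hne 0 2 1 (by decide) (by decide) (by decide))
        (hne 2 3 1 (by decide) (by decide) (by decide)) (hne 3 0 1 (by decide) (by decide) (by decide)) hmem
      have Q1 := sgn_mulpos P1
      have Q2 := sgn_mulpos P2
      have Q3 := sgn_mulpos P3
      rw [hp_0_2_1] at Q1
      rw [hp_2_3_1, hp_2_3_0] at Q2
      rw [hp_3_0_1, hp_3_0_2] at Q3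
      exact hKb ⟨Q1, Q2, Q3⟩
    · have himg : p '' ↑(({0, 1, 2, 3} : Finset (Fin 5)).erase 2) = {p 0, p 1, p 3} := by
        rw [show ({0, 1, 2, 3} : Finset (Fin 5)).erase 2 = {0, 1, 3} by decide]
        simp [Set.image_insert_eq]
      rw [himg]
      intro hmem
      obtain ⟨P1, P2, P3⟩ := inside_pos (hne 0 1 2 (by decide) (by decide) (by decide))
        (hne 1 3 2 (by decide) (by decide) (by decide)) (hne 3 0 2 (by decide) (by decide) (by decide)) hmem
      have Q1 := sgn_mulpos P1
      have Q2 := sgn_mulpos P2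
      have Q3 := sgn_mulpos P3
      rw [hp_1_3_2, hp_1_3_0] at Q2
      rw [hp_3_0_2, hp_3_0_1] at Q3
      exact hKc ⟨Q1, Q2, Q3⟩
    · have himg : p '' ↑(({0, 1, 2, 3} : Finset (Fin 5)).erase 3) = {p 0, p 1, p 2} := by
        rw [show ({0, 1, 2, 3} : Finset (Fin 5)).erase 3 = {0, 1, 2} by decide]
        simp [Set.image_insert_eq]
      rw [himg]
      intro hmem
      obtain ⟨P1, P2, P3⟩ := inside_pos (hne 0 1 3 (by decide) (by decide) (by decide))
        (hne 1 2 3 (by decide) (by decide) (by decide)) (hne 2 0 3 (by decide) (by decide) (by decide)) hmem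
      have Q1 := sgn_mulpos P1
      have Q2 := sgn_mulpos P2
      have Q3 := sgn_mulpos P3
      rw [hp_1_2_0] at Q2
      rw [hp_2_0_3, hp_2_0_1] at Q3
      exact hKd ⟨Q1, Q2, Q3⟩
  · obtain ⟨hKa, hKb, hKc, hKd⟩ := hK
    refine ⟨{0, 1, 2, 4}, by decide, ?_⟩
    intro i hi
    simp only [Finset.mem_insert, Finset.mem_singleton] at hi
    rcases hi with rfl | rfl | rfl | rfl
    · have himg : p '' ↑(({0, 1, 2, 4} : Finset (Fin 5)).erase 0) = {p 1, p 2, p 4} := by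
        rw [show ({0, 1, 2, 4} : Finset (Fin 5)).erase 0 = {1, 2, 4} by decide]
        simp [Set.image_insert_eq]
      rw [himg]
      intro hmem
      obtain ⟨P1, P2, P3⟩ := inside_pos (hne 1 2 0 (by decide) (by decide) (by decide))
        (hne 2 4 0 (by decide) (by decide) (by decide)) (hne 4 1 0 (by decide) (by decide) (by decide)) hmem
      have Q1 := sgn_mulpos P1
      have Q2 := sgn_mulpos P2
      have Q3 := sgn_mulpos P3
      rw [hp_1_2_0] at Q1
      rw [hp_2_4_0, hp_2_4_1] at Q2
      rw [hp_4_1_0, hp_4_1_2] at Q3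
      exact hKa ⟨Q1, Q2, Q3⟩
    · have himg : p '' ↑(({0, 1, 2, 4} : Finset (Fin 5)).erase 1) = {p 0, p 2, p 4} := by
        rw [show ({0, 1, 2, 4} : Finset (Fin 5)).erase 1 = {0, 2, 4} by decide]
        simp [Set.image_insert_eq]
      rw [himg]
      intro hmem
      obtain ⟨P1, P2, P3⟩ := inside_pos (hne 0 2 1 (by decide) (by decide) (by decide))
        (hne 2 4 1 (by decide) (by decide) (by decide)) (hne 4 0 1 (by decide) (by decide) (by decide)) hmem
      have Q1 := sgn_mulpos P1
      have Q2 := sgn_mulpos P2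
      have Q3 := sgn_mulpos P3
      rw [hp_0_2_1] at Q1
      rw [hp_2_4_1, hp_2_4_0] at Q2
      rw [hp_4_0_1, hp_4_0_2] at Q3
      exact hKb ⟨Q1, Q2, Q3⟩
    · have himg : p '' ↑(({0, 1, 2, 4} : Finset (Fin 5)).erase 2) = {p 0, p 1, p 4} := by
        rw [show ({0, 1, 2, 4} : Finset (Fin 5)).erase 2 = {0, 1, 4} by decide]
        simp [Set.image_insert_eq]
      rw [himg]
      intro hmem
      obtain ⟨P1, P2, P3⟩ := inside_pos (hne 0 1 2 (by decide) (by decide) (by decide))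
        (hne 1 4 2 (by decide) (by decide) (by decide)) (hne 4 0 2 (by decide) (by decide) (by decide)) hmem
      have Q1 := sgn_mulpos P1
      have Q2 := sgn_mulpos P2
      have Q3 := sgn_mulpos P3
      rw [hp_1_4_2, hp_1_4_0] at Q2
      rw [hp_4_0_2, hp_4_0_1] at Q3
      exact hKc ⟨Q1, Q2, Q3⟩
    · have himg : p '' ↑(({0, 1, 2, 4} : Finset (Fin 5)).erase 4) = {p 0, p 1, p 2} := by
        rw [show ({0, 1, 2, 4} : Finset (Fin 5)).erase 4 = {0, 1, 2} by decide]
        simp [Set.image_insert_eq]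
      rw [himg]
      intro hmem
      obtain ⟨P1, P2, P3⟩ := inside_pos (hne 0 1 4 (by decide) (by decide) (by decide))
        (hne 1 2 4 (by decide) (by decide) (by decide)) (hne 2 0 4 (by decide) (by decide) (by decide)) hmem
      have Q1 := sgn_mulpos P1
      have Q2 := sgn_mulpos P2
      have Q3 := sgn_mulpos P3
      rw [hp_1_2_0] at Q2
      rw [hp_2_0_4, hp_2_0_1] at Q3
      exact hKd ⟨Q1, Q2, Q3⟩
  · obtain ⟨hKa, hKb, hKc, hKd⟩ := hK
    refine ⟨{0, 1, 3, 4}, by decide, ?_⟩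
    intro i hi
    simp only [Finset.mem_insert, Finset.mem_singleton] at hi
    rcases hi with rfl | rfl | rfl | rfl
    · have himg : p '' ↑(({0, 1, 3, 4} : Finset (Fin 5)).erase 0) = {p 1, p 3, p 4} := by
        rw [show ({0, 1, 3, 4} : Finset (Fin 5)).erase 0 = {1, 3, 4} by decide]
        simp [Set.image_insert_eq]
      rw [himg]
      intro hmem
      obtain ⟨P1, P2, P3⟩ := inside_pos (hne 1 3 0 (by decide) (by decide) (by decide))
        (hne 3 4 0 (by decide) (by decide) (by decide)) (hne 4 1 0 (by decide) (by decide) (by decide)) hmem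
      have Q1 := sgn_mulpos P1
      have Q2 := sgn_mulpos P2
      have Q3 := sgn_mulpos P3
      rw [hp_1_3_0] at Q1
      rw [hp_3_4_0, hp_3_4_1] at Q2
      rw [hp_4_1_0, hp_4_1_3] at Q3
      exact hKa ⟨Q1, Q2, Q3⟩
    · have himg : p '' ↑(({0, 1, 3, 4} : Finset (Fin 5)).erase 1) = {p 0, p 3, p 4} := by
        rw [show ({0, 1, 3, 4} : Finset (Fin 5)).erase 1 = {0, 3, 4} by decide]
        simp [Set.image_insert_eq]
      rw [himg]
      intro hmem
      obtain ⟨P1, P2, P3⟩ := inside_pos (hne 0 3 1 (by decide) (by decide) (by decide))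
        (hne 3 4 1 (by decide) (by decide) (by decide)) (hne 4 0 1 (by decide) (by decide) (by decide)) hmem
      have Q1 := sgn_mulpos P1
      have Q2 := sgn_mulpos P2
      have Q3 := sgn_mulpos P3
      rw [hp_0_3_1] at Q1
      rw [hp_3_4_1, hp_3_4_0] at Q2
      rw [hp_4_0_1, hp_4_0_3] at Q3
      exact hKb ⟨Q1, Q2, Q3⟩
    · have himg : p '' ↑(({0, 1, 3, 4} : Finset (Fin 5)).erase 3) = {p 0, p 1, p 4} := by
        rw [show ({0, 1, 3, 4} : Finset (Fin 5)).erase 3 = {0, 1, 4} by decide]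
        simp [Set.image_insert_eq]
      rw [himg]
      intro hmem
      obtain ⟨P1, P2, P3⟩ := inside_pos (hne 0 1 3 (by decide) (by decide) (by decide))
        (hne 1 4 3 (by decide) (by decide) (by decide)) (hne 4 0 3 (by decide) (by decide) (by decide)) hmem
      have Q1 := sgn_mulpos P1
      have Q2 := sgn_mulpos P2
      have Q3 := sgn_mulpos P3
      rw [hp_1_4_3, hp_1_4_0] at Q2
      rw [hp_4_0_3, hp_4_0_1] at Q3
      exact hKc ⟨Q1, Q2, Q3⟩
    · have himg : p '' ↑(({0, 1, 3, 4} : Finset (Fin 5)).erase 4) = {p 0, p 1, p 3} := by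
        rw [show ({0, 1, 3, 4} : Finset (Fin 5)).erase 4 = {0, 1, 3} by decide]
        simp [Set.image_insert_eq]
      rw [himg]
      intro hmem
      obtain ⟨P1, P2, P3⟩ := inside_pos (hne 0 1 4 (by decide) (by decide) (by decide))
        (hne 1 3 4 (by decide) (by decide) (by decide)) (hne 3 0 4 (by decide) (by decide) (by decide)) hmem
      have Q1 := sgn_mulpos P1
      have Q2 := sgn_mulpos P2
      have Q3 := sgn_mulpos P3
      rw [hp_1_3_0] at Q2
      rw [hp_3_0_4, hp_3_0_1] at Q3
      exact hKd ⟨Q1, Q2, Q3⟩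
  · obtain ⟨hKa, hKb, hKc, hKd⟩ := hK
    refine ⟨{0, 2, 3, 4}, by decide, ?_⟩
    intro i hi
    simp only [Finset.mem_insert, Finset.mem_singleton] at hi
    rcases hi with rfl | rfl | rfl | rfl
    · have himg : p '' ↑(({0, 2, 3, 4} : Finset (Fin 5)).erase 0) = {p 2, p 3, p 4} := by
        rw [show ({0, 2, 3, 4} : Finset (Fin 5)).erase 0 = {2, 3, 4} by decide]
        simp [Set.image_insert_eq]
      rw [himg]
      intro hmem
      obtain ⟨P1, P2, P3⟩ := inside_pos (hne 2 3 0 (by decide) (by decide) (by decide))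
        (hne 3 4 0 (by decide) (by decide) (by decide)) (hne 4 2 0 (by decide) (by decide) (by decide)) hmem
      have Q1 := sgn_mulpos P1
      have Q2 := sgn_mulpos P2
      have Q3 := sgn_mulpos P3
      rw [hp_2_3_0] at Q1
      rw [hp_3_4_0, hp_3_4_2] at Q2
      rw [hp_4_2_0, hp_4_2_3] at Q3
      exact hKa ⟨Q1, Q2, Q3⟩
    · have himg : p '' ↑(({0, 2, 3, 4} : Finset (Fin 5)).erase 2) = {p 0, p 3, p 4} := by
        rw [show ({0, 2, 3, 4} : Finset (Fin 5)).erase 2 = {0, 3, 4} by decide]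
        simp [Set.image_insert_eq]
      rw [himg]
      intro hmem
      obtain ⟨P1, P2, P3⟩ := inside_pos (hne 0 3 2 (by decide) (by decide) (by decide))
        (hne 3 4 2 (by decide) (by decide) (by decide)) (hne 4 0 2 (by decide) (by decide) (by decide)) hmem
      have Q1 := sgn_mulpos P1
      have Q2 := sgn_mulpos P2
      have Q3 := sgn_mulpos P3
      rw [hp_0_3_2] at Q1
      rw [hp_3_4_2, hp_3_4_0] at Q2
      rw [hp_4_0_2, hp_4_0_3] at Q3
      exact hKb ⟨Q1, Q2, Q3⟩
    · have himg : p '' ↑(({0, 2, 3, 4} : Finset (Fin 5)).erase 3) = {p 0, p 2, p 4} := by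
        rw [show ({0, 2, 3, 4} : Finset (Fin 5)).erase 3 = {0, 2, 4} by decide]
        simp [Set.image_insert_eq]
      rw [himg]
      intro hmem
      obtain ⟨P1, P2, P3⟩ := inside_pos (hne 0 2 3 (by decide) (by decide) (by decide))
        (hne 2 4 3 (by decide) (by decide) (by decide)) (hne 4 0 3 (by decide) (by decide) (by decide)) hmem
      have Q1 := sgn_mulpos P1
      have Q2 := sgn_mulpos P2
      have Q3 := sgn_mulpos P3
      rw [hp_2_4_3, hp_2_4_0] at Q2
      rw [hp_4_0_3, hp_4_0_2] at Q3
      exact hKc ⟨Q1, Q2, Q3⟩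
    · have himg : p '' ↑(({0, 2, 3, 4} : Finset (Fin 5)).erase 4) = {p 0, p 2, p 3} := by
        rw [show ({0, 2, 3, 4} : Finset (Fin 5)).erase 4 = {0, 2, 3} by decide]
        simp [Set.image_insert_eq]
      rw [himg]
      intro hmem
      obtain ⟨P1, P2, P3⟩ := inside_pos (hne 0 2 4 (by decide) (by decide) (by decide))
        (hne 2 3 4 (by decide) (by decide) (by decide)) (hne 3 0 4 (by decide) (by decide) (by decide)) hmem
      have Q1 := sgn_mulpos P1
      have Q2 := sgn_mulpos P2
      have Q3 := sgn_mulpos P3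
      rw [hp_2_3_0] at Q2
      rw [hp_3_0_4, hp_3_0_2] at Q3
      exact hKd ⟨Q1, Q2, Q3⟩
  · obtain ⟨hKa, hKb, hKc, hKd⟩ := hK
    refine ⟨{1, 2, 3, 4}, by decide, ?_⟩
    intro i hi
    simp only [Finset.mem_insert, Finset.mem_singleton] at hi
    rcases hi with rfl | rfl | rfl | rfl
    · have himg : p '' ↑(({1, 2, 3, 4} : Finset (Fin 5)).erase 1) = {p 2, p 3, p 4} := by
        rw [show ({1, 2, 3, 4} : Finset (Fin 5)).erase 1 = {2, 3, 4} by decide]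
        simp [Set.image_insert_eq]
      rw [himg]
      intro hmem
      obtain ⟨P1, P2, P3⟩ := inside_pos (hne 2 3 1 (by decide) (by decide) (by decide))
        (hne 3 4 1 (by decide) (by decide) (by decide)) (hne 4 2 1 (by decide) (by decide) (by decide)) hmem
      have Q1 := sgn_mulpos P1
      have Q2 := sgn_mulpos P2
      have Q3 := sgn_mulpos P3
      rw [hp_2_3_1] at Q1
      rw [hp_3_4_1, hp_3_4_2] at Q2
      rw [hp_4_2_1, hp_4_2_3] at Q3
      exact hKa ⟨Q1, Q2, Q3⟩
    · have himg : p '' ↑(({1, 2, 3, 4} : Finset (Fin 5)).erase 2) = {p 1, p 3, p 4} := by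
        rw [show ({1, 2, 3, 4} : Finset (Fin 5)).erase 2 = {1, 3, 4} by decide]
        simp [Set.image_insert_eq]
      rw [himg]
      intro hmem
      obtain ⟨P1, P2, P3⟩ := inside_pos (hne 1 3 2 (by decide) (by decide) (by decide))
        (hne 3 4 2 (by decide) (by decide) (by decide)) (hne 4 1 2 (by decide) (by decide) (by decide)) hmem
      have Q1 := sgn_mulpos P1
      have Q2 := sgn_mulpos P2
      have Q3 := sgn_mulpos P3
      rw [hp_1_3_2] at Q1
      rw [hp_3_4_2, hp_3_4_1] at Q2
      rw [hp_4_1_2, hp_4_1_3] at Q3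
      exact hKb ⟨Q1, Q2, Q3⟩
    · have himg : p '' ↑(({1, 2, 3, 4} : Finset (Fin 5)).erase 3) = {p 1, p 2, p 4} := by
        rw [show ({1, 2, 3, 4} : Finset (Fin 5)).erase 3 = {1, 2, 4} by decide]
        simp [Set.image_insert_eq]
      rw [himg]
      intro hmem
      obtain ⟨P1, P2, P3⟩ := inside_pos (hne 1 2 3 (by decide) (by decide) (by decide))
        (hne 2 4 3 (by decide) (by decide) (by decide)) (hne 4 1 3 (by decide) (by decide) (by decide)) hmem
      have Q1 := sgn_mulpos P1
      have Q2 := sgn_mulpos P2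
      have Q3 := sgn_mulpos P3
      rw [hp_2_4_3, hp_2_4_1] at Q2
      rw [hp_4_1_3, hp_4_1_2] at Q3
      exact hKc ⟨Q1, Q2, Q3⟩
    · have himg : p '' ↑(({1, 2, 3, 4} : Finset (Fin 5)).erase 4) = {p 1, p 2, p 3} := by
        rw [show ({1, 2, 3, 4} : Finset (Fin 5)).erase 4 = {1, 2, 3} by decide]
        simp [Set.image_insert_eq]
      rw [himg]
      intro hmem
      obtain ⟨P1, P2, P3⟩ := inside_pos (hne 1 2 4 (by decide) (by decide) (by decide))
        (hne 2 3 4 (by decide) (by decide) (by decide)) (hne 3 1 4 (by decide) (by decide) (by decide)) hmem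
      have Q1 := sgn_mulpos P1
      have Q2 := sgn_mulpos P2
      have Q3 := sgn_mulpos P3
      rw [hp_2_3_1] at Q2
      rw [hp_3_1_4, hp_3_1_2] at Q3
      exact hKd ⟨Q1, Q2, Q3⟩
end
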